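/- Let p ∈ ℝ[t] be a polynomial of degree ≥ 1 whose leading coefficient is irrational. Then (1/(N−M)) ∑_{n=M+1}^N e^{2πi p(n)} → 0 as N − M → ∞; that is, for every ε > 0 there exists K such that for all integers M < N with N − M ≥ K, |(1/(N−M)) ∑_{n=M+1}^N e^{2πi p(n)}| ≤ ε. -/

import Mathlib

open Finset Polynomial Complex


noncomputable def wexp (x : ℝ) : ℂ := Complex.exp (2 * Real.pi * Complex.I * (x : ℝ))

lemma norm_wexp (x : ℝ) : ‖wexp x‖ = 1 := by
  rw [wexp, Complex.norm_exp]; simp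

lemma wexp_add (x y : ℝ) : wexp (x + y) = wexp x * wexp y := by
  rw [wexp, wexp, wexp, ← Complex.exp_add]; push_cast; ring_nf

lemma conj_wexp (x : ℝ) : (starRingEnd ℂ) (wexp x) = wexp (-x) := by
  rw [wexp, wexp, ← Complex.exp_conj]
  congr 1
  simp only [map_mul, Complex.conj_I, Complex.conj_ofReal, map_ofNat, Complex.ofReal_neg]
  ring

lemma wexp_mul_conj (x y : ℝ) : wexp x * (starRingEnd ℂ) (wexp y) = wexp (x - y) := by
  rw [conj_wexp, ← wexp_add]; ring_nf

lemma hasse_top (p : ℝ[X]) (m : ℕ) (hm : p.natDegree = m + 1) :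
    hasseDeriv m p = C (p.coeff m) + C ((m + 1 : ℝ) * p.coeff (m + 1)) * X := by
  ext n
  rw [Polynomial.hasseDeriv_coeff]
  match n with
  | 0 => simp
  | 1 =>
      rw [Nat.add_comm 1 m, Nat.choose_succ_self_right]
      push_cast
      simp
  | (k + 2) =>
      rw [Polynomial.coeff_eq_zero_of_natDegree_lt (by omega : p.natDegree < k + 2 + m)]
      simp [Polynomial.coeff_X, Polynomial.coeff_C, Polynomial.coeff_one]

lemma hasse_const (p : ℝ[X]) (m k : ℕ) (hm : p.natDegree = m + 1) (hk : m < k) :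
    ∃ c : ℝ, hasseDeriv k p = C c := by
  have h := Polynomial.natDegree_hasseDeriv_le p k
  rw [hm] at h
  have : (hasseDeriv k p).natDegree = 0 := by omega
  exact ⟨(hasseDeriv k p).coeff 0, Polynomial.eq_C_of_natDegree_eq_zero this⟩

lemma poly_step (p : ℝ[X]) (m : ℕ) (hm : p.natDegree = m + 1)
    (hirr : Irrational p.leadingCoeff) (h1 h2 : ℕ) (hne : h1 ≠ h2) :
    ((taylor (h1 : ℝ) p) - (taylor (h2 : ℝ) p)).natDegree = m ∧
      Irrational ((taylor (h1 : ℝ) p) - (taylor (h2 : ℝ) p)).leadingCoeff := by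
  set q := (taylor (h1 : ℝ) p) - (taylor (h2 : ℝ) p) with hq
  have hcoeff : ∀ k : ℕ, q.coeff k =
      (hasseDeriv k p).eval (h1 : ℝ) - (hasseDeriv k p).eval (h2 : ℝ) := by
    intro k
    rw [hq, Polynomial.coeff_sub, Polynomial.taylor_coeff, Polynomial.taylor_coeff]
  have hle : q.natDegree ≤ m := by
    rw [Polynomial.natDegree_le_iff_coeff_eq_zero]
    intro k hk
    obtain ⟨c, hc⟩ := hasse_const p m k hm hk
    rw [hcoeff, hc]
    simp
  have hcm : q.coeff m = (m + 1 : ℝ) * p.leadingCoeff * ((h1 : ℝ) - (h2 : ℝ)) := by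
    rw [hcoeff, hasse_top p m hm, Polynomial.leadingCoeff, hm]
    simp
    ring
  have hirr' : Irrational (q.coeff m) := by
    rw [hcm]
    have : (m + 1 : ℝ) * p.leadingCoeff * ((h1 : ℝ) - (h2 : ℝ))
        = (((m + 1 : ℤ) * ((h1 : ℤ) - (h2 : ℤ)) : ℤ) : ℝ) * p.leadingCoeff := by
      push_cast; ring
    rw [this]
    refine hirr.intCast_mul ?_
    have : (h1 : ℤ) ≠ (h2 : ℤ) := by exact_mod_cast hne
    intro h
    rcases mul_eq_zero.1 h with h' | h'
    · omega
    · omega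
  have hne0 : q.coeff m ≠ 0 := by
    intro h
    exact hirr'.ne_int 0 (by simp [h])
  have hdeg : q.natDegree = m := le_antisymm hle (Polynomial.le_natDegree_of_ne_zero hne0)
  refine ⟨hdeg, ?_⟩
  rwa [Polynomial.leadingCoeff, hdeg]


lemma wexp_pow (a : ℝ) (n : ℕ) : wexp a ^ n = wexp (a * n) := by
  rw [wexp, wexp, ← Complex.exp_nat_mul]; congr 1; push_cast; ring

lemma wexp_ne_one {a : ℝ} (ha : Irrational a) : wexp a ≠ 1 := by
  rw [wexp]
  intro h
  obtain ⟨n, hn⟩ := Complex.exp_eq_one_iff.1 h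
  have hpi : (2 * (Real.pi : ℂ) * Complex.I) ≠ 0 := by
    simp [Real.pi_ne_zero, Complex.I_ne_zero]
  have : (a : ℂ) = (n : ℂ) := by
    have h2 : 2 * (Real.pi : ℂ) * Complex.I * (a : ℂ) = 2 * (Real.pi : ℂ) * Complex.I * (n : ℂ) := by
      rw [hn]; ring
    exact mul_left_cancel₀ hpi h2
  have : a = (n : ℝ) := by exact_mod_cast this
  exact ha.ne_int n this

lemma weyl_base (p : ℝ[X]) (hm : p.natDegree = 1) (hirr : Irrational p.leadingCoeff)
    {ε : ℝ} (hε : 0 < ε) :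
    ∃ K : ℕ, ∀ M N : ℕ, M < N → K ≤ N - M →
      ‖∑ n ∈ Ioc M N, wexp (p.eval (n : ℝ))‖ ≤ ε * ((N : ℝ) - (M : ℝ)) := by
  set a := p.coeff 1 with ha
  set b := p.coeff 0 with hb
  have hlc : p.leadingCoeff = a := by rw [Polynomial.leadingCoeff, hm]
  rw [hlc] at hirr
  have heval : ∀ x : ℝ, p.eval x = b + a * x := by
    intro x
    rw [Polynomial.eval_eq_sum_range, hm]
    simp [Finset.sum_range_succ, ha, hb]
  set z := wexp a with hz
  have hz1 : z ≠ 1 := wexp_ne_one hirr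
  have hznorm : ∀ n : ℕ, ‖z ^ n‖ = 1 := fun n => by
    rw [wexp_pow]; exact norm_wexp _
  set c := 2 / ‖z - 1‖ with hc
  have hzn : ‖z - 1‖ > 0 := by
    simp only [norm_pos_iff, sub_ne_zero]; exact hz1
  have hcpos : 0 < c := by positivity
  refine ⟨⌈c / ε⌉₊ + 1, fun M N hMN hK => ?_⟩
  have hsum : ∑ n ∈ Ioc M N, wexp (p.eval (n : ℝ)) = wexp b * ∑ n ∈ Ioc M N, z ^ n := by
    rw [Finset.mul_sum]
    refine Finset.sum_congr rfl fun n _ => ?_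
    rw [heval, wexp_add, wexp_pow]
  have hgeom : ∑ n ∈ Ioc M N, z ^ n =
      (z ^ (N + 1) - 1) / (z - 1) - (z ^ (M + 1) - 1) / (z - 1) := by
    rw [← Finset.Ico_add_one_add_one_eq_Ioc, Finset.sum_Ico_eq_sub _ (by omega), geom_sum_eq hz1, geom_sum_eq hz1]
  have hnorm : ‖∑ n ∈ Ioc M N, wexp (p.eval (n : ℝ))‖ ≤ c := by
    rw [hsum, norm_mul, norm_wexp, one_mul, hgeom]
    rw [div_sub_div_same]
    rw [norm_div]
    rw [hc, div_le_div_iff_of_pos_right hzn]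
    calc ‖z ^ (N + 1) - 1 - (z ^ (M + 1) - 1)‖ = ‖z ^ (N + 1) - z ^ (M + 1)‖ := by ring_nf
      _ ≤ ‖z ^ (N + 1)‖ + ‖z ^ (M + 1)‖ := norm_sub_le _ _
      _ = 2 := by rw [hznorm, hznorm]; norm_num
  refine hnorm.trans ?_
  have hL : (⌈c / ε⌉₊ : ℝ) + 1 ≤ (N : ℝ) - M := by
    have : ((⌈c / ε⌉₊ + 1 : ℕ) : ℝ) ≤ ((N - M : ℕ) : ℝ) := by exact_mod_cast hK
    rw [Nat.cast_sub hMN.le] at this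
    push_cast at this
    linarith
  have h1 : c / ε ≤ (N : ℝ) - M := le_trans (Nat.le_ceil _) (by linarith)
  rw [div_le_iff₀ hε] at h1
  linarith [h1]

set_option maxHeartbeats 1200000 in
lemma weyl_step (p : ℝ[X]) (d : ℕ) (hdeg : p.natDegree = d + 2)
    (hirr : Irrational p.leadingCoeff) {ε : ℝ} (hε : 0 < ε)
    (key : ∀ h1 h2 : ℕ, ∃ K : ℕ, h1 ≠ h2 → ∀ M N : ℕ, M < N → K ≤ N - M →
      ‖∑ n ∈ Ioc M N, wexp (((taylor (h1 : ℝ) p) - (taylor (h2 : ℝ) p)).eval (n : ℝ))‖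
        ≤ ε ^ 2 / 8 * ((N : ℝ) - (M : ℝ))) :
    ∃ K : ℕ, ∀ M N : ℕ, M < N → K ≤ N - M →
      ‖∑ n ∈ Ioc M N, wexp (p.eval (n : ℝ))‖ ≤ ε * ((N : ℝ) - (M : ℝ)) := by
  choose Kf hKf using key
  set H := max 1 ⌈8 / ε ^ 2⌉₊ with hHdef
  have hH1 : 1 ≤ H := le_max_left _ _
  have hHpos : (0 : ℝ) < (H : ℝ) := by exact_mod_cast hH1
  have hHge : 8 / ε ^ 2 ≤ (H : ℝ) :=
    le_trans (Nat.le_ceil _) (Nat.cast_le.2 (le_max_right _ _))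
  set K0 := (range H).sup (fun h1 => (range H).sup (fun h2 => Kf h1 h2)) with hK0
  refine ⟨K0 + H + ⌈4 * (H : ℝ) / ε⌉₊ + 1, fun M N hMN hK => ?_⟩
  set Lr : ℝ := (N : ℝ) - (M : ℝ) with hLr
  have hLreq : Lr = ((N - M : ℕ) : ℝ) := by
    rw [Nat.cast_sub hMN.le]
  have hLge : (K0 + H + ⌈4 * (H : ℝ) / ε⌉₊ + 1 : ℕ) ≤ ((N - M : ℕ) : ℝ) := by
    exact_mod_cast hK
  have hLrK0 : (K0 : ℝ) ≤ Lr := by rw [hLreq]; push_cast at hLge ⊢; linarith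
  have hLrH : (H : ℝ) ≤ Lr := by rw [hLreq]; push_cast at hLge ⊢; linarith
  have hLrC : 4 * (H : ℝ) / ε ≤ Lr := by
    rw [hLreq]
    refine le_trans (Nat.le_ceil _) ?_
    push_cast at hLge ⊢; linarith
  have hLrpos : 0 < Lr := by
    rw [hLreq]
    have h1 : 1 ≤ N - M := by omega
    have : (1 : ℝ) ≤ ((N - M : ℕ) : ℝ) := by exact_mod_cast h1
    linarith
  set F : ℕ → ℂ := fun n => wexp (p.eval (n : ℝ)) with hF
  set g : ℕ → ℂ := fun n => ∑ h ∈ range H, F (n + h) with hg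
  set S : ℂ := ∑ n ∈ Ioc M N, F n with hS
  set T : ℂ := ∑ n ∈ Ioc M N, g n with hT
  -- window bound
  have hwin : ∀ a k : ℕ, ‖∑ n ∈ Ioc a (a + k), F n‖ ≤ (k : ℝ) := by
    intro a k
    refine le_trans (norm_sum_le _ _) ?_
    have : ∀ n ∈ Ioc a (a + k), ‖F n‖ = 1 := fun n _ => norm_wexp _
    rw [Finset.sum_congr rfl this, Finset.sum_const, Nat.card_Ioc]
    simp
  -- Step A : boundary
  have hA : ‖T - (H : ℂ) * S‖ ≤ 2 * (H : ℝ) ^ 2 := by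
    have hTc : T = ∑ h ∈ range H, ∑ n ∈ Ioc M N, F (n + h) := Finset.sum_comm
    have hHS : (H : ℂ) * S = ∑ _h ∈ range H, S := by
      rw [Finset.sum_const, card_range, nsmul_eq_mul]
    rw [hTc, hHS, ← Finset.sum_sub_distrib]
    refine le_trans (norm_sum_le _ _) ?_
    have per : ∀ h ∈ range H, ‖(∑ n ∈ Ioc M N, F (n + h)) - S‖ ≤ 2 * (H : ℝ) := by
      intro h hh
      have hmap : ∑ n ∈ Ioc M N, F (n + h) = ∑ n ∈ Ioc (M + h) (N + h), F n := by
        rw [← Finset.map_add_right_Ioc, Finset.sum_map]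
        rfl
      have e1 : S + ∑ n ∈ Ioc N (N + h), F n = ∑ n ∈ Ioc M (N + h), F n :=
        Finset.sum_Ioc_consecutive _ hMN.le (Nat.le_add_right _ _)
      have e2 : (∑ n ∈ Ioc M (M + h), F n) + ∑ n ∈ Ioc (M + h) (N + h), F n
          = ∑ n ∈ Ioc M (N + h), F n :=
        Finset.sum_Ioc_consecutive _ (Nat.le_add_right _ _) (by omega)
      have hdiff : (∑ n ∈ Ioc M N, F (n + h)) - S
          = (∑ n ∈ Ioc N (N + h), F n) - ∑ n ∈ Ioc M (M + h), F n := by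
        rw [hmap]; linear_combination e2 - e1
      rw [hdiff]
      refine le_trans (norm_sub_le _ _) ?_
      have hb1 := hwin N h
      have hb2 := hwin M h
      have : (h : ℝ) ≤ (H : ℝ) := by
        have := Finset.mem_range.1 hh
        exact_mod_cast this.le
      linarith
    refine le_trans (Finset.sum_le_sum per) ?_
    rw [Finset.sum_const, card_range, nsmul_eq_mul]
    ring_nf
    exact le_refl _
  -- Step B : pair sums
  have hU : ∀ h1 ∈ range H, ∀ h2 ∈ range H,
      ‖∑ n ∈ Ioc M N, F (n + h1) * (starRingEnd ℂ) (F (n + h2))‖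
        ≤ (if h1 = h2 then Lr else 0) + ε ^ 2 / 8 * Lr := by
    intro h1 hh1 h2 hh2
    by_cases hne : h1 = h2
    · subst hne
      rw [if_pos rfl]
      have hone : ∀ n ∈ Ioc M N, ‖F (n + h1) * (starRingEnd ℂ) (F (n + h1))‖ = 1 := by
        intro n _
        rw [norm_mul, RCLike.norm_conj, norm_wexp]
        norm_num
      have : ‖∑ n ∈ Ioc M N, F (n + h1) * (starRingEnd ℂ) (F (n + h1))‖ ≤ Lr := by
        refine le_trans (norm_sum_le _ _) ?_
        rw [Finset.sum_congr rfl hone, Finset.sum_const, Nat.card_Ioc]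
        rw [hLreq]; simp
      have h8 : 0 ≤ ε ^ 2 / 8 * Lr := by positivity
      linarith
    · simp only [if_neg hne]
      have hsummand : ∀ n : ℕ, F (n + h1) * (starRingEnd ℂ) (F (n + h2))
          = wexp (((taylor (h1 : ℝ) p) - (taylor (h2 : ℝ) p)).eval (n : ℝ)) := by
        intro n
        rw [hF]
        simp only []
        rw [wexp_mul_conj]
        congr 1
        rw [Polynomial.eval_sub, Polynomial.taylor_eval, Polynomial.taylor_eval]
        push_cast
        ring_nf
      rw [Finset.sum_congr rfl (fun n _ => hsummand n)]
      have hKle : Kf h1 h2 ≤ N - M := by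
        have l1 : Kf h1 h2 ≤ (range H).sup (fun h2 => Kf h1 h2) := Finset.le_sup hh2
        have l2 : (range H).sup (fun h2 => Kf h1 h2) ≤ K0 :=
          Finset.le_sup (f := fun h1 => (range H).sup (fun h2 => Kf h1 h2)) hh1
        omega
      have h0 : 0 + ε ^ 2 / 8 * Lr = ε ^ 2 / 8 * Lr := by ring
      rw [h0]
      exact hKf h1 h2 hne M N hMN hKle
  -- Step C : sum of squares
  have hC : ∑ n ∈ Ioc M N, ‖g n‖ ^ 2 ≤ (H : ℝ) * Lr + (H : ℝ) ^ 2 * (ε ^ 2 / 8) * Lr := by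
    have hgsq : ((∑ n ∈ Ioc M N, ‖g n‖ ^ 2 : ℝ) : ℂ)
        = ∑ h1 ∈ range H, ∑ h2 ∈ range H,
            ∑ n ∈ Ioc M N, F (n + h1) * (starRingEnd ℂ) (F (n + h2)) := by
      rw [Complex.ofReal_sum]
      have hterm : ∀ n : ℕ, ((‖g n‖ ^ 2 : ℝ) : ℂ) = g n * (starRingEnd ℂ) (g n) := by
        intro n
        rw [Complex.mul_conj, Complex.normSq_eq_norm_sq]
      rw [Finset.sum_congr rfl (fun n _ => hterm n)]
      have hexp : ∀ n : ℕ, g n * (starRingEnd ℂ) (g n)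
          = ∑ h1 ∈ range H, ∑ h2 ∈ range H, F (n + h1) * (starRingEnd ℂ) (F (n + h2)) := by
        intro n
        rw [hg]
        simp only [map_sum]
        rw [Finset.sum_mul_sum]
      rw [Finset.sum_congr rfl (fun n _ => hexp n)]
      rw [Finset.sum_comm]
      refine Finset.sum_congr rfl fun h1 _ => ?_
      exact Finset.sum_comm
    have hnormeq : ∑ n ∈ Ioc M N, ‖g n‖ ^ 2
        = ‖((∑ n ∈ Ioc M N, ‖g n‖ ^ 2 : ℝ) : ℂ)‖ := by
      rw [Complex.norm_real]
      exact (Real.norm_of_nonneg (Finset.sum_nonneg fun n _ => by positivity)).symm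
    rw [hnormeq, hgsq]
    refine le_trans (norm_sum_le _ _) ?_
    refine le_trans (Finset.sum_le_sum fun h1 hh1 => norm_sum_le _ _) ?_
    refine le_trans (Finset.sum_le_sum fun h1 hh1 =>
      Finset.sum_le_sum fun h2 hh2 => hU h1 hh1 h2 hh2) ?_
    have hinner : ∀ h1 ∈ range H,
        ∑ h2 ∈ range H, ((if h1 = h2 then Lr else 0) + ε ^ 2 / 8 * Lr)
          = Lr + (H : ℝ) * (ε ^ 2 / 8 * Lr) := by
      intro h1 hh1
      rw [Finset.sum_add_distrib, Finset.sum_ite_eq, if_pos hh1, Finset.sum_const, card_range,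
        nsmul_eq_mul]
    rw [Finset.sum_congr rfl hinner, Finset.sum_const, card_range, nsmul_eq_mul]
    ring_nf
    exact le_refl _
  -- Step D : Cauchy-Schwarz
  have hD : (∑ n ∈ Ioc M N, ‖g n‖) ^ 2 ≤ Lr * ∑ n ∈ Ioc M N, ‖g n‖ ^ 2 := by
    have := sq_sum_le_card_mul_sum_sq (s := Ioc M N) (f := fun n => ‖g n‖)
    rw [Nat.card_Ioc] at this
    rw [hLreq]
    exact_mod_cast this
  -- combine
  have hAnn : 0 ≤ ∑ n ∈ Ioc M N, ‖g n‖ := Finset.sum_nonneg fun n _ => norm_nonneg _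
  have hsq : (∑ n ∈ Ioc M N, ‖g n‖) ^ 2 ≤ (Lr * ((H : ℝ) * (ε / 2))) ^ 2 := by
    refine le_trans hD ?_
    have h8 : (8 : ℝ) ≤ (H : ℝ) * ε ^ 2 := by
      rw [div_le_iff₀ (by positivity)] at hHge
      linarith
    have hkey : (H : ℝ) * Lr + (H : ℝ) ^ 2 * (ε ^ 2 / 8) * Lr
        ≤ Lr * ((H : ℝ) ^ 2 * (ε ^ 2 / 4)) := by
      have hH2 : (H : ℝ) ≤ (H : ℝ) ^ 2 * (ε ^ 2 / 8) := by nlinarith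
      nlinarith
    calc Lr * ∑ n ∈ Ioc M N, ‖g n‖ ^ 2
        ≤ Lr * ((H : ℝ) * Lr + (H : ℝ) ^ 2 * (ε ^ 2 / 8) * Lr) := by
          exact mul_le_mul_of_nonneg_left hC hLrpos.le
      _ ≤ Lr * (Lr * ((H : ℝ) ^ 2 * (ε ^ 2 / 4))) := by
          exact mul_le_mul_of_nonneg_left hkey hLrpos.le
      _ = (Lr * ((H : ℝ) * (ε / 2))) ^ 2 := by ring
  have hgA : ∑ n ∈ Ioc M N, ‖g n‖ ≤ Lr * ((H : ℝ) * (ε / 2)) := by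
    have hrhs : 0 ≤ Lr * ((H : ℝ) * (ε / 2)) := by positivity
    nlinarith
  have hTA : ‖T‖ ≤ Lr * ((H : ℝ) * (ε / 2)) := le_trans (norm_sum_le _ _) hgA
  have hHS : (H : ℝ) * ‖S‖ ≤ ‖T‖ + 2 * (H : ℝ) ^ 2 := by
    have h := norm_sub_le T (T - (H : ℂ) * S)
    have heq : T - (T - (H : ℂ) * S) = (H : ℂ) * S := by ring
    rw [heq, norm_mul, Complex.norm_natCast] at h
    linarith
  have h2H : 2 * (H : ℝ) ^ 2 ≤ (H : ℝ) * (ε / 2 * Lr) := by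
    rw [div_le_iff₀ hε] at hLrC
    nlinarith [mul_le_mul_of_nonneg_left hLrC hHpos.le]
  have hfinal : (H : ℝ) * ‖S‖ ≤ (H : ℝ) * (ε * Lr) := by
    calc (H : ℝ) * ‖S‖ ≤ ‖T‖ + 2 * (H : ℝ) ^ 2 := hHS
      _ ≤ Lr * ((H : ℝ) * (ε / 2)) + (H : ℝ) * (ε / 2 * Lr) := by linarith
      _ = (H : ℝ) * (ε * Lr) := by ring
  have := le_of_mul_le_mul_left (by linarith [hfinal] : (H : ℝ) * ‖S‖ ≤ (H : ℝ) * (ε * Lr)) hHpos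
  exact this

lemma weyl_key : ∀ d : ℕ, ∀ p : ℝ[X], p.natDegree = d + 1 → Irrational p.leadingCoeff →
    ∀ ε : ℝ, 0 < ε → ∃ K : ℕ, ∀ M N : ℕ, M < N → K ≤ N - M →
      ‖∑ n ∈ Ioc M N, wexp (p.eval (n : ℝ))‖ ≤ ε * ((N : ℝ) - (M : ℝ)) := by
  intro d
  induction d with
  | zero => exact fun p h1 hirr ε hε => weyl_base p h1 hirr hε
  | succ d ih =>
    intro p hdeg hirr ε hε
    refine weyl_step p d hdeg hirr hε fun h1 h2 => ?_
    by_cases hne : h1 = h2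
    · exact ⟨0, fun h => absurd hne h⟩
    · obtain ⟨hdq, hirrq⟩ := poly_step p (d + 1) hdeg hirr h1 h2 hne
      obtain ⟨K, hK⟩ := ih _ hdq hirrq (ε ^ 2 / 8) (by positivity)
      exact ⟨K, fun _ => hK⟩

/-- **Weyl's theorem, uniform version.** If `p` is a real polynomial of degree `≥ 1`
with irrational leading coefficient, then `(1/(N-M)) ∑_{n=M+1}^N e^{2πi p(n)} → 0` as
`N - M → ∞`. -/
theorem weyl_uniform (p : Polynomial ℝ) (hdeg : 1 ≤ p.natDegree)
    (hirr : Irrational p.leadingCoeff) :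
    ∀ ε > (0 : ℝ), ∃ K : ℕ, ∀ M N : ℕ, M < N → K ≤ N - M →
      ‖∑ n ∈ Finset.Icc (M + 1) N,
          Complex.exp (2 * Real.pi * Complex.I * (p.eval (n : ℝ) : ℝ))‖ / ((N : ℝ) - M)
        ≤ ε := by
  intro ε hε
  have hd : p.natDegree = (p.natDegree - 1) + 1 := by omega
  obtain ⟨K, hK⟩ := weyl_key (p.natDegree - 1) p hd hirr ε hε
  refine ⟨K, fun M N hMN hKle => ?_⟩
  have hpos : (0 : ℝ) < (N : ℝ) - (M : ℝ) := by
    have : (M : ℝ) < (N : ℝ) := by exact_mod_cast hMN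
    linarith
  rw [div_le_iff₀ hpos]
  have hIcc : Finset.Icc (M + 1) N = Ioc M N := Finset.Icc_add_one_left_eq_Ioc M N
  rw [hIcc]
  exact hK M N hMN hKle
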